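/- Let K be a field and, for all n, k ∈ ℕ, let F n k be a K-vector space, with linear maps P n k : F n (k+1) → F n k (horizontal) and d n k : F (n+1) k → F n k (vertical) satisfying: (i) commutativity, P n k ∘ d n (k+1) = d n k ∘ P (n+1) k for all n, k; (ii) exactness of every row, i.e. every P n 0 is surjective and range(P n (k+1)) = ker(P n k) for all n, k; (iii) exactness of every column of index k ≥ 1, i.e. d 0 k is surjective and ker(d n k) = range(d (n+1) k) for all n and all k ≥ 1; (iv) the column of index 0 is a complex, i.e. d n 0 ∘ d (n+1) 0 = 0 for all n. Then the column of index 0 is exact: d 0 0 is surjective and ker(d n 0) = range(d (n+1) 0) for all n ∈ ℕ. -/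
import Mathlib

section Aux

variable {K : Type*} [Field K] (F : ℕ → ℕ → Type*)
    [∀ n k, AddCommGroup (F n k)] [∀ n k, Module K (F n k)]
    (P : ∀ n k, F n (k + 1) →ₗ[K] F n k)
    (d : ∀ n k, F (n + 1) k →ₗ[K] F n k)

/-- Auxiliary condition: for row `0` no condition, for row `m+1` the element maps to `0`
two steps down-left. -/
def stmt11Cond : ∀ (n k : ℕ), F n (k + 1) → Prop
  | 0, _, _ => True
  | (m + 1), k, y => d m k (P (m + 1) k y) = 0

theorem stmt11Aux
    (hcomm : ∀ n k, ∀ x : F (n + 1) (k + 1), P n k (d n (k + 1) x) = d n k (P (n + 1) k x))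
    (hrow_exact : ∀ n k, LinearMap.range (P n (k + 1)) = LinearMap.ker (P n k))
    (hcol_surj : ∀ k, 1 ≤ k → Function.Surjective (d 0 k))
    (hcol_exact : ∀ n, ∀ k, 1 ≤ k → LinearMap.ker (d n k) = LinearMap.range (d (n + 1) k)) :
    ∀ n k (y : F n (k + 1)), stmt11Cond F P d n k y →
      ∃ v : F (n + 1) (k + 1), P n k (d n (k + 1) v) = P n k y := by
  intro n
  induction n with
  | zero =>
    intro k y _
    obtain ⟨v, hv⟩ := hcol_surj (k + 1) (by omega) y
    exact ⟨v, by rw [hv]⟩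
  | succ m ih =>
    intro k y hy
    have hy' : d m k (P (m + 1) k y) = 0 := hy
    have h1 : P m k (d m (k + 1) y) = 0 := by rw [hcomm]; exact hy'
    have h2 : d m (k + 1) y ∈ LinearMap.range (P m (k + 1)) := by
      rw [hrow_exact]; exact h1
    obtain ⟨y', hyy'⟩ := h2
    have hcond : stmt11Cond F P d m (k + 1) y' := by
      cases m with
      | zero => trivial
      | succ l =>
        show d l (k + 1) (P (l + 1) (k + 1) y') = 0
        rw [hyy']
        have : d (l + 1) (k + 1) y ∈ LinearMap.ker (d l (k + 1)) := by
          rw [hcol_exact l (k + 1) (by omega)]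
          exact ⟨y, rfl⟩
        exact this
    obtain ⟨v', hv'⟩ := ih (k + 1) y' hcond
    have h3 : d m (k + 1) (y - P (m + 1) (k + 1) v') = 0 := by
      rw [map_sub, ← hcomm m (k + 1) v', hv', hyy', sub_self]
    have h4 : y - P (m + 1) (k + 1) v' ∈ LinearMap.range (d (m + 1) (k + 1)) := by
      rw [← hcol_exact m (k + 1) (by omega)]; exact h3
    obtain ⟨v, hv⟩ := h4
    refine ⟨v, ?_⟩
    have h5 : P (m + 1) k (P (m + 1) (k + 1) v') = 0 := by
      have : P (m + 1) (k + 1) v' ∈ LinearMap.ker (P (m + 1) k) := by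
        rw [← hrow_exact]; exact ⟨v', rfl⟩
      exact this
    rw [hv, map_sub, h5, sub_zero]

end Aux

/-- (Diagram chase for the first column.) Given a commutative diagram of
`K`-vector spaces `F n k` with horizontal maps `P n k : F n (k+1) → F n k` forming exact
rows (ending in surjections `P n 0`) and vertical maps `d n k : F (n+1) k → F n k`
forming exact columns for `k ≥ 1`, and assuming the column of index `0` is a complex,
that column is actually exact: `d 0 0` is surjective and
`ker (d n 0) = range (d (n+1) 0)` for all `n`. -/
theorem stmt11 {K : Type*} [Field K] (F : ℕ → ℕ → Type*)
    [∀ n k, AddCommGroup (F n k)] [∀ n k, Module K (F n k)]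
    (P : ∀ n k, F n (k + 1) →ₗ[K] F n k)
    (d : ∀ n k, F (n + 1) k →ₗ[K] F n k)
    (hcomm : ∀ n k, ∀ x : F (n + 1) (k + 1), P n k (d n (k + 1) x) = d n k (P (n + 1) k x))
    (hrow_surj : ∀ n, Function.Surjective (P n 0))
    (hrow_exact : ∀ n k, LinearMap.range (P n (k + 1)) = LinearMap.ker (P n k))
    (hcol_surj : ∀ k, 1 ≤ k → Function.Surjective (d 0 k))
    (hcol_exact : ∀ n, ∀ k, 1 ≤ k → LinearMap.ker (d n k) = LinearMap.range (d (n + 1) k))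
    (hcomplex : ∀ n, ∀ x : F (n + 2) 0, d n 0 (d (n + 1) 0 x) = 0) :
    Function.Surjective (d 0 0) ∧
      ∀ n, LinearMap.ker (d n 0) = LinearMap.range (d (n + 1) 0) := by
  constructor
  · intro y
    obtain ⟨y1, hy1⟩ := hrow_surj 0 y
    obtain ⟨x1, hx1⟩ := hcol_surj 1 le_rfl y1
    exact ⟨P 1 0 x1, by rw [← hcomm 0 0 x1, hx1, hy1]⟩
  · intro n
    apply le_antisymm
    · intro x hx
      have hx0 : d n 0 x = 0 := hx
      obtain ⟨x1, hx1⟩ := hrow_surj (n + 1) x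
      have hcond : stmt11Cond F P d (n + 1) 0 x1 := by
        show d n 0 (P (n + 1) 0 x1) = 0
        rw [hx1]; exact hx0
      obtain ⟨v, hv⟩ :=
        stmt11Aux F P d hcomm hrow_exact hcol_surj hcol_exact (n + 1) 0 x1 hcond
      refine ⟨P (n + 2) 0 v, ?_⟩
      rw [← hcomm (n + 1) 0 v, hv, hx1]
    · rintro x ⟨z, rfl⟩
      exact hcomplex n z
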